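/- Let g : [0,1] → ℝ be bounded and measurable with ∫₀¹ g(u) du = 0, and let n satisfy √n > sup|g|. Let Q_n be the probability measure on [0,1]ⁿ with density x ↦ ∏_{j=1}^n (1 + g(x_j)/√n) with respect to Q_{0,n} = P₀ⁿ. Then for every t ∈ [0,1] the restriction of Q_n to the σ-algebra F_{n,t} has Radon–Nikodym derivative dQ_{n|F_{n,t}}/dQ_{0,n|F_{n,t}}(x) = ∏_{j=1}^n (1 + E_{P₀}(g | F_{1,t})(x_j)/√n) for Q_{0,n}-almost every x = (x₁,…,x_n). -/

import Mathlib

open MeasureTheory Filter Set intervalIntegral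

attribute [local instance] MeasureTheory.Measure.Subtype.measureSpace

theorem rect_integral {E : Type*} [MeasureSpace E] [SigmaFinite (volume : Measure E)] {n : ℕ}
    (φ : E → ℝ) (B : Fin n → Set E) (hB : ∀ i, MeasurableSet (B i)) :
    ∫ x : Fin n → E in Set.pi Set.univ B, ∏ j, φ (x j) = ∏ j, ∫ y in B j, φ y := by
  have h1 : ∀ x : Fin n → E, (Set.pi Set.univ B).indicator (fun x => ∏ j, φ (x j)) x
      = ∏ j, (B j).indicator φ (x j) := by
    intro x
    by_cases hx : x ∈ Set.pi Set.univ B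
    · rw [Set.indicator_of_mem hx]
      exact Finset.prod_congr rfl fun j _ =>
        (Set.indicator_of_mem (hx j (Set.mem_univ j)) φ).symm
    · rw [Set.indicator_of_notMem hx]
      rw [Set.mem_univ_pi] at hx
      push_neg at hx
      obtain ⟨j, hj⟩ := hx
      exact (Finset.prod_eq_zero (Finset.mem_univ j)
        (Set.indicator_of_notMem hj φ)).symm
  rw [← MeasureTheory.integral_indicator (MeasurableSet.univ_pi hB)]
  calc ∫ x : Fin n → E, (Set.pi Set.univ B).indicator (fun x => ∏ j, φ (x j)) x
      = ∫ x : Fin n → E, ∏ j, (B j).indicator φ (x j) := by simp_rw [h1]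
    _ = ∏ j, ∫ y, (B j).indicator φ y :=
        integral_fintype_prod_eq_prod (ι := Fin n) (fun _ => (B _).indicator φ)
    _ = ∏ j, ∫ y in B j, φ y := Finset.prod_congr rfl fun j _ =>
        MeasureTheory.integral_indicator (hB j)

/-- Let `g : [0,1] → ℝ` be bounded measurable with `∫₀¹ g = 0` and let `n`
satisfy `√n > sup|g|`.  Let `Q_n` be the measure on `[0,1]ⁿ` with density
`x ↦ ∏_j (1 + g(x_j)/√n)` with respect to `Q_{0,n} = P₀ⁿ` (with `P₀` the uniform
distribution on `[0,1]`).  Then for every `t ∈ [0,1]` the restriction of `Q_n` to the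
σ-algebra `F_{n,t}` (generated by the indicators `x ↦ 1_{[0,s]}(x_i)`, `s ≤ t`) has
Radon–Nikodym derivative
`dQ_{n|F_{n,t}}/dQ_{0,n|F_{n,t}}(x) = ∏_j (1 + E_{P₀}(g | F_{1,t})(x_j)/√n)` for
`Q_{0,n}`-a.e. `x`, where `E_{P₀}(g|F_{1,t})(y) = g(y)` for `y ≤ t` and
`= (1/(1−t))∫_t¹ g(u) du` for `y > t`. -/
theorem statement13
    (P0 : Measure (Set.Icc (0:ℝ) 1)) [IsProbabilityMeasure P0]
    (hP0 : P0 = Measure.comap Subtype.val volume)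
    (g : ℝ → ℝ) (hgm : Measurable g)
    (C : ℝ) (hgb : ∀ y ∈ Set.Icc (0:ℝ) 1, |g y| ≤ C)
    (hg0 : ∫ y in Set.Icc (0:ℝ) 1, g y = 0)
    (n : ℕ) (hn : C < Real.sqrt n)
    (t : ℝ) (ht : t ∈ Set.Icc (0:ℝ) 1)
    (Fnt : MeasurableSpace (Fin n → Set.Icc (0:ℝ) 1))
    (hFnt : Fnt = MeasurableSpace.generateFrom
      {A | ∃ (i : Fin n) (s : ℝ), s ≤ t ∧ A = {x | (x i : ℝ) ≤ s}})
    (hle : Fnt ≤ MeasurableSpace.pi)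
    (Q0n Qn : @Measure (Fin n → Set.Icc (0:ℝ) 1) MeasurableSpace.pi)
    (hQ0n : Q0n = Measure.pi fun _ : Fin n => P0)
    (hQn : Qn = Q0n.withDensity fun x =>
      ENNReal.ofReal (∏ j, (1 + g (x j) / Real.sqrt n))) :
    (Qn.trim hle).rnDeriv (Q0n.trim hle)
      =ᵐ[(Q0n.trim hle : @Measure (Fin n → Set.Icc (0:ℝ) 1) Fnt)]
        fun x => ENNReal.ofReal (∏ j,
          (1 + (if ((x j : ℝ) ≤ t) then g (x j)
                else (1 / (1 - t)) * ∫ u in t..1, g u) / Real.sqrt n)) := by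
  classical
  subst hFnt
  set r : ℝ := Real.sqrt n with hr_def
  have hC0 : 0 ≤ C := (abs_nonneg _).trans (hgb 0 ⟨le_rfl, zero_le_one⟩)
  have hr : 0 < r := lt_of_le_of_lt hC0 hn
  set c : ℝ := (1 / (1 - t)) * ∫ u in t..1, g u with hc_def
  obtain ⟨H, hH_def⟩ : ∃ H : ℝ → ℝ, H = fun u => if u ≤ t then g u else c := ⟨_, rfl⟩
  -- basic bounds
  have hcC : |c| ≤ C := by
    rcases eq_or_lt_of_le ht.2 with h1 | h1
    · rw [hc_def, ← h1]
      simpa [intervalIntegral.integral_same] using hC0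
    · have hInt : |∫ u in t..1, g u| ≤ C * |1 - t| := by
        have := intervalIntegral.norm_integral_le_of_norm_le_const (C := C)
          (f := g) (a := t) (b := 1) (fun x hx => by
            rw [Set.uIoc_of_le ht.2] at hx
            simpa using hgb x ⟨le_trans ht.1 hx.1.le, hx.2⟩)
        simpa using this
      have h1t : 0 < 1 - t := by linarith
      calc |c| = (1 / (1 - t)) * |∫ u in t..1, g u| := by
            rw [hc_def, abs_mul, abs_of_pos (by positivity : (0:ℝ) < 1 / (1 - t))]
        _ ≤ (1 / (1 - t)) * (C * |1 - t|) :=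
            mul_le_mul_of_nonneg_left hInt (by positivity)
        _ = C := by rw [abs_of_pos h1t]; field_simp
  have hHb : ∀ u ∈ Set.Icc (0:ℝ) 1, |H u| ≤ C := by
    intro u hu
    by_cases hut : u ≤ t
    · simpa [hH_def, hut] using hgb u hu
    · simpa [hH_def, hut] using hcC
  have hHm : Measurable H := by
    rw [hH_def]; exact Measurable.ite measurableSet_Iic hgm measurable_const
  have hpos : ∀ ψ : ℝ, |ψ| ≤ C → 0 < 1 + ψ / r := by
    intro ψ hψ
    have h1 : -r < ψ := lt_of_lt_of_le (neg_lt_neg hn) (neg_le_of_abs_le hψ)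
    have : (-1 : ℝ) < ψ / r := by rw [lt_div_iff₀ hr]; linarith
    linarith
  -- volume on the subtype
  have hPvol : P0 = (volume : Measure (Set.Icc (0:ℝ) 1)) := hP0
  haveI hPprob : IsProbabilityMeasure (volume : Measure (Set.Icc (0:ℝ) 1)) := by
    rw [← hPvol]; infer_instance
  have hQ0nvol : Q0n = (volume : Measure (Fin n → Set.Icc (0:ℝ) 1)) := by
    rw [hQ0n, MeasureTheory.volume_pi]
    exact congrArg _ (funext fun _ => hPvol)
  haveI : IsProbabilityMeasure Q0n := by rw [hQ0n]; infer_instance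
  -- measurability on the subtype
  have hgm' : Measurable (fun y : Set.Icc (0:ℝ) 1 => g y) := hgm.comp measurable_subtype_coe
  have hHm' : Measurable (fun y : Set.Icc (0:ℝ) 1 => H y) := hHm.comp measurable_subtype_coe
  -- integrability of bounded measurable functions on the subtype
  have hbint : ∀ ψ : ℝ → ℝ, Measurable ψ → (∀ u ∈ Set.Icc (0:ℝ) 1, |ψ u| ≤ C) →
      Integrable (fun y : Set.Icc (0:ℝ) 1 => ψ y) volume := by
    intro ψ hm hb
    exact (integrable_const C).mono' (hm.comp measurable_subtype_coe).aestronglyMeasurable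
      (Eventually.of_forall fun y => by simpa using hb y y.2)
  have hint_g : Integrable (fun y : Set.Icc (0:ℝ) 1 => 1 + g y / r) volume :=
    (integrable_const 1).add ((hbint g hgm hgb).div_const r)
  have hint_H : Integrable (fun y : Set.Icc (0:ℝ) 1 => 1 + H y / r) volume :=
    (integrable_const 1).add ((hbint H hHm hHb).div_const r)
  -- the subtype integral of g is 0
  have hsubg : ∫ y : Set.Icc (0:ℝ) 1, g y = 0 := by
    rw [integral_subtype measurableSet_Icc]; exact hg0
  -- IntegrableOn facts on ℝ
  haveI : IsFiniteMeasure (volume.restrict (Set.Icc (0:ℝ) 1)) := by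
    constructor
    rw [Measure.restrict_apply_univ, Real.volume_Icc]
    exact ENNReal.ofReal_lt_top
  have hbR : ∀ ψ : ℝ → ℝ, Measurable ψ → (∀ u ∈ Set.Icc (0:ℝ) 1, |ψ u| ≤ C) →
      IntegrableOn ψ (Set.Icc (0:ℝ) 1) volume := by
    intro ψ hm hb
    exact (integrable_const C).mono' hm.aestronglyMeasurable
      ((ae_restrict_iff' measurableSet_Icc).2 (Eventually.of_forall fun u hu => by
        simpa using hb u hu))
  -- the subtype integral of H is 0
  have hsubH : ∫ y : Set.Icc (0:ℝ) 1, H y = 0 := by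
    rw [integral_subtype measurableSet_Icc]
    have hsplit : Set.Icc (0:ℝ) 1 = Set.Icc 0 t ∪ Set.Ioc t 1 :=
      (Set.Icc_union_Ioc_eq_Icc ht.1 ht.2).symm
    have hdisj : Disjoint (Set.Icc (0:ℝ) t) (Set.Ioc t 1) := by
      rw [Set.disjoint_left]
      rintro u ⟨-, hu2⟩ ⟨hu3, -⟩
      exact absurd hu2 (not_le.2 hu3)
    have hsub1 : Set.Icc (0:ℝ) t ⊆ Set.Icc 0 1 := Set.Icc_subset_Icc le_rfl ht.2
    have hsub2 : Set.Ioc t 1 ⊆ Set.Icc (0:ℝ) 1 := fun u hu => ⟨le_trans ht.1 hu.1.le, hu.2⟩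
    have key2 : ∀ ψ : ℝ → ℝ, IntegrableOn ψ (Set.Icc (0:ℝ) 1) volume →
        ∫ u in Set.Icc (0:ℝ) 1, ψ u
          = (∫ u in Set.Icc 0 t, ψ u) + ∫ u in Set.Ioc t 1, ψ u := by
      intro ψ hψ
      rw [hsplit]
      exact setIntegral_union hdisj measurableSet_Ioc (hψ.mono_set hsub1) (hψ.mono_set hsub2)
    have e1 : ∫ u in Set.Icc 0 t, H u = ∫ u in Set.Icc 0 t, g u :=
      setIntegral_congr_fun measurableSet_Icc fun u hu => by simp [hH_def, hu.2]
    have e2 : ∫ u in Set.Ioc t 1, H u = ∫ u in Set.Ioc t 1, (fun _ => c) u :=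
      setIntegral_congr_fun measurableSet_Ioc fun u hu => by simp [hH_def, not_le.2 hu.1]
    have e3 : ∫ u in Set.Ioc t 1, (fun _ => c) u = c * (1 - t) := by
      rw [setIntegral_const, Real.volume_real_Ioc, smul_eq_mul,
        max_eq_left (by linarith [ht.2] : (0:ℝ) ≤ 1 - t)]
      ring
    have e4 : c * (1 - t) = ∫ u in Set.Ioc t 1, g u := by
      rcases eq_or_lt_of_le ht.2 with h1 | h1
      · rw [hc_def, ← h1]
        simp
      · have h1t : (1:ℝ) - t ≠ 0 := by linarith
        rw [hc_def, ← intervalIntegral.integral_of_le ht.2]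
        field_simp
    have e5 : (∫ u in Set.Icc 0 t, g u) + ∫ u in Set.Ioc t 1, g u = 0 := by
      rw [← key2 g (hbR g hgm hgb)]; exact hg0
    rw [key2 H (hbR H hHm hHb), e1, e2, e3, e4, e5]
  -- total integrals are 1
  have hEg : ∫ y : Set.Icc (0:ℝ) 1, (1 + g y / r) = 1 := by
    rw [integral_add (integrable_const 1) ((hbint g hgm hgb).div_const r),
      MeasureTheory.integral_div, hsubg, MeasureTheory.integral_const]
    simp
  have hEH : ∫ y : Set.Icc (0:ℝ) 1, (1 + H y / r) = 1 := by
    rw [integral_add (integrable_const 1) ((hbint H hHm hHb).div_const r),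
      MeasureTheory.integral_div, hsubH, MeasureTheory.integral_const]
    simp
  -- coordinate sets
  have hB : ∀ s : ℝ, MeasurableSet {y : Set.Icc (0:ℝ) 1 | (y:ℝ) ≤ s} := fun s =>
    measurable_subtype_coe measurableSet_Iic
  -- coordinate integral identity
  have key : ∀ s : ℝ, s ≤ t ∨ 1 ≤ s →
      ∫ y in {y : Set.Icc (0:ℝ) 1 | (y:ℝ) ≤ s}, (1 + g y / r)
        = ∫ y in {y : Set.Icc (0:ℝ) 1 | (y:ℝ) ≤ s}, (1 + H y / r) := by
    rintro s (hs | hs)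
    · apply setIntegral_congr_fun (hB s)
      intro y hy
      have hyt : (y:ℝ) ≤ t := le_trans hy hs
      simp [hH_def, hyt]
    · have huniv : {y : Set.Icc (0:ℝ) 1 | (y:ℝ) ≤ s} = Set.univ :=
        Set.eq_univ_of_forall fun y => le_trans y.2.2 hs
      rw [huniv, Measure.restrict_univ, hEg, hEH]
  -- rectangle computation for withDensity measures
  have hcalc : ∀ φ : ℝ → ℝ, Measurable φ → (∀ y : Set.Icc (0:ℝ) 1, 0 ≤ 1 + φ y / r) →
      Integrable (fun y : Set.Icc (0:ℝ) 1 => 1 + φ y / r) volume → ∀ s : Fin n → ℝ,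
      (Q0n.withDensity fun x => ENNReal.ofReal (∏ j, (1 + φ (x j) / r)))
          {x | ∀ i, ((x i : ℝ) ≤ s i)}
        = ENNReal.ofReal
            (∏ j, ∫ y in {y : Set.Icc (0:ℝ) 1 | (y:ℝ) ≤ s j}, (1 + φ y / r)) := by
    intro φ hφm hφ0 hφint s
    have hset : {x : Fin n → Set.Icc (0:ℝ) 1 | ∀ i, ((x i : ℝ) ≤ s i)}
        = Set.pi Set.univ (fun i => {y : Set.Icc (0:ℝ) 1 | (y:ℝ) ≤ s i}) := by
      ext x; simp [Set.mem_pi]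
    have hmeasset : MeasurableSet {x : Fin n → Set.Icc (0:ℝ) 1 | ∀ i, ((x i : ℝ) ≤ s i)} := by
      rw [hset]; exact MeasurableSet.univ_pi fun i => hB (s i)
    rw [withDensity_apply _ hmeasset, hQ0nvol]
    have hint : Integrable (fun x : Fin n → Set.Icc (0:ℝ) 1 => ∏ j, (1 + φ (x j) / r))
        volume := Integrable.fintype_prod (f := fun _ (y : Set.Icc (0:ℝ) 1) => 1 + φ ↑y / r) fun _ => hφint
    rw [← ofReal_integral_eq_lintegral_ofReal hint.restrict
      (Eventually.of_forall fun x => Finset.prod_nonneg fun j _ => hφ0 _), hset,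
      rect_integral (fun y : Set.Icc (0:ℝ) 1 => 1 + φ y / r) _ (fun i => hB (s i))]
  -- positivity of integrands
  have hg0' : ∀ y : Set.Icc (0:ℝ) 1, 0 ≤ 1 + g y / r := fun y => (hpos _ (hgb y y.2)).le
  have hH0' : ∀ y : Set.Icc (0:ℝ) 1, 0 ≤ 1 + H y / r := fun y => (hpos _ (hHb y y.2)).le
  -- Qn agrees with the H-density measure on rectangles
  have hQcalc : ∀ s : Fin n → ℝ, (∀ i, s i ≤ t ∨ 1 ≤ s i) →
      Qn {x | ∀ i, ((x i : ℝ) ≤ s i)}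
        = (Q0n.withDensity fun x => ENNReal.ofReal (∏ j, (1 + H (x j) / r)))
            {x | ∀ i, ((x i : ℝ) ≤ s i)} := by
    intro s hs
    rw [hQn, hcalc g hgm hg0' hint_g s, hcalc H hHm hH0' hint_H s]
    exact congrArg _ (Finset.prod_congr rfl fun j _ => key (s j) (hs j))
  -- the rectangle π-system
  set S' : Set (Set (Fin n → Set.Icc (0:ℝ) 1)) :=
    {A | ∃ s : Fin n → ℝ, (∀ i, s i ≤ t ∨ 1 ≤ s i)
      ∧ A = {x | ∀ i, ((x i : ℝ) ≤ s i)}} with hS'_def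
  have hpiS : IsPiSystem S' := by
    rintro _ ⟨s, hs, rfl⟩ _ ⟨s', hs', rfl⟩ -
    refine ⟨fun i => min (s i) (s' i), fun i => ?_, ?_⟩
    · rcases hs i with h1 | h1
      · exact Or.inl (le_trans (min_le_left _ _) h1)
      · rcases hs' i with h2 | h2
        · exact Or.inl (le_trans (min_le_right _ _) h2)
        · exact Or.inr (le_min h1 h2)
    · ext x
      simp only [Set.mem_inter_iff, Set.mem_setOf_eq, le_min_iff]
      constructor
      · rintro ⟨h1, h2⟩ i; exact ⟨h1 i, h2 i⟩
      · intro hx; exact ⟨fun i => (hx i).1, fun i => (hx i).2⟩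
  -- the generated σ-algebras agree
  have hgen : MeasurableSpace.generateFrom
      {A | ∃ (i : Fin n) (s : ℝ), s ≤ t ∧ A = {x : Fin n → Set.Icc (0:ℝ) 1 | (x i : ℝ) ≤ s}}
      = MeasurableSpace.generateFrom S' := by
    apply le_antisymm
    · apply MeasurableSpace.generateFrom_le
      rintro _ ⟨i, s, hs, rfl⟩
      have hAeq : {x : Fin n → Set.Icc (0:ℝ) 1 | (x i : ℝ) ≤ s}
          = {x : Fin n → Set.Icc (0:ℝ) 1 |
              ∀ j, ((x j : ℝ) ≤ (fun j => if j = i then s else 1) j)} := by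
        ext x
        simp only [Set.mem_setOf_eq]
        constructor
        · intro hx j
          by_cases hj : j = i
          · subst hj; simpa using hx
          · simp only [hj, if_false]
            exact (x j).2.2
        · intro hx
          simpa using hx i
      rw [hAeq]
      refine MeasurableSpace.measurableSet_generateFrom ⟨_, fun j => ?_, rfl⟩
      by_cases hj : j = i
      · simp only [hj, if_true]
        exact Or.inl hs
      · simp only [hj, if_false]
        exact Or.inr le_rfl
    · apply MeasurableSpace.generateFrom_le
      rintro _ ⟨s, hs, rfl⟩
      have hIeq : {x : Fin n → Set.Icc (0:ℝ) 1 | ∀ i, ((x i : ℝ) ≤ s i)}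
          = ⋂ i, {x : Fin n → Set.Icc (0:ℝ) 1 | (x i : ℝ) ≤ s i} := by
        ext x; simp
      rw [hIeq]
      refine MeasurableSet.iInter fun i => ?_
      rcases hs i with h1 | h1
      · exact MeasurableSpace.measurableSet_generateFrom ⟨i, s i, h1, rfl⟩
      · have : {x : Fin n → Set.Icc (0:ℝ) 1 | (x i : ℝ) ≤ s i} = Set.univ :=
          Set.eq_univ_of_forall fun x => le_trans (x i).2.2 h1
        rw [this]
        exact MeasurableSet.univ
  -- measurability of the candidate density w.r.t. the sub-σ-algebra
  set Bgen : Set (Set (Set.Icc (0:ℝ) 1)) :=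
    {B | ∃ s : ℝ, s ≤ t ∧ B = {y : Set.Icc (0:ℝ) 1 | (y:ℝ) ≤ s}} with hBgen_def
  have hφmin : @Measurable _ _ (MeasurableSpace.generateFrom Bgen) _
      (fun y : Set.Icc (0:ℝ) 1 => min (y:ℝ) t) := by
    apply measurable_of_Iic
    intro a
    by_cases hta : t ≤ a
    · have huniv : (fun y : Set.Icc (0:ℝ) 1 => min (y:ℝ) t) ⁻¹' Set.Iic a = Set.univ :=
        Set.eq_univ_of_forall fun y => by
          simp only [Set.mem_preimage, Set.mem_Iic]
          exact le_trans (min_le_right _ _) hta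
      rw [huniv]
      exact MeasurableSet.univ
    · have hpre : (fun y : Set.Icc (0:ℝ) 1 => min (y:ℝ) t) ⁻¹' Set.Iic a
          = {y : Set.Icc (0:ℝ) 1 | (y:ℝ) ≤ a} := by
        ext y
        simp only [Set.mem_preimage, Set.mem_Iic, Set.mem_setOf_eq, min_le_iff]
        exact ⟨fun hy => hy.resolve_right hta, fun hy => Or.inl hy⟩
      rw [hpre]
      exact MeasurableSpace.measurableSet_generateFrom ⟨a, le_of_not_ge hta, rfl⟩
  have hHgen : @Measurable _ _ (MeasurableSpace.generateFrom Bgen) _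
      (fun y : Set.Icc (0:ℝ) 1 => H y) := by
    have hrw : (fun y : Set.Icc (0:ℝ) 1 => H y)
        = fun y : Set.Icc (0:ℝ) 1 => if ((y:ℝ) ≤ t) then g (min (y:ℝ) t) else c := by
      funext y
      by_cases hy : (y:ℝ) ≤ t
      · simp [hH_def, hy, min_eq_left hy]
      · simp [hH_def, hy]
    rw [hrw]
    exact Measurable.ite (MeasurableSpace.measurableSet_generateFrom ⟨t, le_rfl, rfl⟩)
      (hgm.comp hφmin) measurable_const
  have heval : ∀ j : Fin n, @Measurable _ _
      (MeasurableSpace.generateFrom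
        {A | ∃ (i : Fin n) (s : ℝ), s ≤ t ∧ A = {x : Fin n → Set.Icc (0:ℝ) 1 | (x i : ℝ) ≤ s}})
      (MeasurableSpace.generateFrom Bgen)
      (fun x : Fin n → Set.Icc (0:ℝ) 1 => x j) := by
    intro j
    refine @measurable_generateFrom _ _
      (MeasurableSpace.generateFrom
        {A | ∃ (i : Fin n) (s : ℝ), s ≤ t ∧ A = {x : Fin n → Set.Icc (0:ℝ) 1 | (x i : ℝ) ≤ s}})
      Bgen _ ?_
    rintro _ ⟨s, hs, rfl⟩
    exact MeasurableSpace.measurableSet_generateFrom ⟨j, s, hs, rfl⟩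
  have hfmeas : @Measurable _ _
      (MeasurableSpace.generateFrom
        {A | ∃ (i : Fin n) (s : ℝ), s ≤ t ∧ A = {x : Fin n → Set.Icc (0:ℝ) 1 | (x i : ℝ) ≤ s}}) _
      (fun x : Fin n → Set.Icc (0:ℝ) 1 => ENNReal.ofReal (∏ j, (1 + H (x j) / r))) := by
    refine ENNReal.measurable_ofReal.comp ?_
    refine Finset.measurable_prod _ fun j _ => ?_
    exact Measurable.add measurable_const ((hHgen.comp (heval j)).div_const r)
  -- Qn is finite
  haveI hQnfin : IsFiniteMeasure Qn := by
    constructor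
    have huniv : (Set.univ : Set (Fin n → Set.Icc (0:ℝ) 1))
        = {x | ∀ i, ((x i : ℝ) ≤ (fun _ : Fin n => (1:ℝ)) i)} :=
      (Set.eq_univ_of_forall fun x i => (x i).2.2).symm
    rw [hQn, huniv, hcalc g hgm hg0' hint_g]
    exact ENNReal.ofReal_lt_top
  -- the trimmed measures agree
  have htrim : Qn.trim hle
      = (Q0n.withDensity fun x => ENNReal.ofReal (∏ j, (1 + H (x j) / r))).trim hle := by
    refine ext_of_generate_finite S' hgen hpiS ?_ ?_
    · intro A hA
      have hAmeas : MeasurableSet[MeasurableSpace.generateFrom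
          {A | ∃ (i : Fin n) (s : ℝ), s ≤ t
            ∧ A = {x : Fin n → Set.Icc (0:ℝ) 1 | (x i : ℝ) ≤ s}}] A := by
        rw [hgen]
        exact MeasurableSpace.measurableSet_generateFrom hA
      rw [trim_measurableSet_eq hle hAmeas, trim_measurableSet_eq hle hAmeas]
      obtain ⟨s, hs, rfl⟩ := hA
      exact hQcalc s hs
    · have hAmeas : MeasurableSet[MeasurableSpace.generateFrom
          {A | ∃ (i : Fin n) (s : ℝ), s ≤ t
            ∧ A = {x : Fin n → Set.Icc (0:ℝ) 1 | (x i : ℝ) ≤ s}}]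
          (Set.univ : Set (Fin n → Set.Icc (0:ℝ) 1)) := MeasurableSet.univ
      rw [trim_measurableSet_eq hle hAmeas, trim_measurableSet_eq hle hAmeas]
      have huniv : (Set.univ : Set (Fin n → Set.Icc (0:ℝ) 1))
          = {x | ∀ i, ((x i : ℝ) ≤ (fun _ : Fin n => (1:ℝ)) i)} :=
        (Set.eq_univ_of_forall fun x i => (x i).2.2).symm
      rw [huniv]
      exact hQcalc (fun _ => 1) (fun i => Or.inr le_rfl)
  -- conclude via the Radon-Nikodym derivative of a withDensity measure
  haveI : IsFiniteMeasure (Q0n.trim hle) := isFiniteMeasure_trim hle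
  have hrn := Measure.rnDeriv_withDensity (Q0n.trim hle) hfmeas
  rw [htrim, trim_withDensity hle hfmeas]
  simpa only [hH_def] using hrn
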